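/- Let φ₁₁, φ₁₂ satisfy the Volterra integral equations above with continuous kernels. Then there is a constant K such that for all x ∈ [a,ξ₁] and all λ ∈ ℂ with |λ| ≥ 1, |φ₁₁(x,λ)| ≤ K |λ| e^{|Im λ| ρ₁ (x-a)} and |φ₁₂(x,λ)| ≤ K |λ| e^{|Im λ| ρ₁ (x-a)} (Gronwall-type bound). -/

import Mathlib

open intervalIntegral Complex


lemma abs_sin_le' (z : ℂ) : ‖Complex.sin z‖ ≤ Real.exp |z.im| := by
  rw [Complex.sin]
  have h1 : ‖Complex.exp (-z * I)‖ = Real.exp z.im := by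
    rw [Complex.norm_exp]; congr 1; simp
  have h2 : ‖Complex.exp (z * I)‖ = Real.exp (-z.im) := by
    rw [Complex.norm_exp]; congr 1; simp
  calc ‖(Complex.exp (-z * I) - Complex.exp (z * I)) * I / 2‖
      ≤ (Real.exp z.im + Real.exp (-z.im)) / 2 := by
        rw [norm_div, norm_mul, Complex.norm_I, mul_one, Complex.norm_two]
        gcongr
        exact (norm_sub_le _ _).trans (by rw [h1, h2])
    _ ≤ Real.exp |z.im| := by
        have := Real.exp_le_exp.2 (le_abs_self z.im)
        have := Real.exp_le_exp.2 (neg_le_abs z.im)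
        linarith

lemma abs_cos_le' (z : ℂ) : ‖Complex.cos z‖ ≤ Real.exp |z.im| := by
  rw [Complex.cos]
  have h1 : ‖Complex.exp (z * I)‖ = Real.exp (-z.im) := by
    rw [Complex.norm_exp]; congr 1; simp
  have h2 : ‖Complex.exp (-z * I)‖ = Real.exp z.im := by
    rw [Complex.norm_exp]; congr 1; simp
  calc ‖(Complex.exp (z * I) + Complex.exp (-z * I)) / 2‖
      ≤ (Real.exp (-z.im) + Real.exp z.im) / 2 := by
        rw [norm_div, Complex.norm_two]
        gcongr
        exact (norm_add_le _ _).trans (by rw [h1, h2])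
    _ ≤ Real.exp |z.im| := by
        have := Real.exp_le_exp.2 (le_abs_self z.im)
        have := Real.exp_le_exp.2 (neg_le_abs z.im)
        linarith

/-- Integral form of Gronwall's inequality. -/
lemma gronwall_integral_form {g : ℝ → ℝ} {a b C L : ℝ} (hL : 0 < L) (hC : 0 ≤ C)
    (hg : Continuous g) (hg0 : ∀ x, 0 ≤ g x)
    (h : ∀ x ∈ Set.Icc a b, g x ≤ C + L * ∫ t in a..x, g t) :
    ∀ x ∈ Set.Icc a b, g x ≤ C * Real.exp (L * (x - a)) := by
  set F : ℝ → ℝ := fun x => ∫ t in a..x, g t with hF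
  have hFd : ∀ x : ℝ, HasDerivAt F (g x) x := fun x =>
    intervalIntegral.integral_hasDerivAt_right (hg.intervalIntegrable a x)
      hg.aestronglyMeasurable.stronglyMeasurableAtFilter hg.continuousAt
  have key : ∀ x ∈ Set.Icc a b, ‖F x‖ ≤ gronwallBound 0 L C (x - a) := by
    apply norm_le_gronwallBound_of_norm_deriv_right_le
      (continuousOn_of_forall_continuousAt (fun x _ => (hFd x).continuousAt))
      (fun x _ => (hFd x).hasDerivWithinAt)
    · simp [hF]
    · intro x hx
      have hx' : x ∈ Set.Icc a b := Set.mem_Icc_of_Ico hx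
      have h1 := h x hx'
      have h2 : F x ≤ |F x| := le_abs_self _
      rw [Real.norm_eq_abs, Real.norm_eq_abs, _root_.abs_of_nonneg (hg0 x)]
      calc g x ≤ C + L * F x := h1
        _ ≤ L * |F x| + C := by nlinarith
  intro x hx
  have h1 := h x hx
  have h2 := key x hx
  rw [Real.norm_eq_abs] at h2
  have h3 : gronwallBound 0 L C (x - a) = C / L * (Real.exp (L * (x - a)) - 1) := by
    rw [gronwallBound_of_K_ne_0 hL.ne']; ring
  have h4 : F x ≤ |F x| := le_abs_self _
  have h5 : L * F x ≤ L * (C / L * (Real.exp (L * (x - a)) - 1)) := by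
    apply mul_le_mul_of_nonneg_left (h4.trans (h2.trans_eq h3)) hL.le
  have h6 : L * (C / L * (Real.exp (L * (x - a)) - 1)) = C * (Real.exp (L * (x - a)) - 1) := by
    field_simp
  nlinarith [h1]

lemma abs_lin_le (U V T₁ T₂ : ℂ) (E : ℝ) (h1 : ‖T₁‖ ≤ E) (h2 : ‖T₂‖ ≤ E) :
    ‖U * T₁ + V * T₂‖ ≤ (‖U‖ + ‖V‖) * E := by
  calc ‖U * T₁ + V * T₂‖
      ≤ ‖U * T₁‖ + ‖V * T₂‖ := norm_add_le _ _
    _ = ‖U‖ * ‖T₁‖ + ‖V‖ * ‖T₂‖ := by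
        rw [norm_mul, norm_mul]
    _ ≤ (‖U‖ + ‖V‖) * E := by
        nlinarith [norm_nonneg U, norm_nonneg V, norm_nonneg T₁]

lemma kernel_integral_bound (a y ρ₁ μ B Sb : ℝ) (hρ : 0 < ρ₁) (hSb : 0 ≤ Sb)
    (hay : a ≤ y) (hB : B = ρ₁ * Sb)
    (W φ : ℝ → ℂ) (g : ℝ → ℝ) (hg : Continuous g) (hg0 : ∀ t, 0 ≤ g t)
    (hW : ∀ t ∈ Set.Ioc a y, ‖W t‖ ≤ Sb * Real.exp (μ * (y - t)))
    (hφg : ∀ t ∈ Set.Ioc a y,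
      ‖φ t‖ * Real.exp (μ * (y - t)) ≤ Real.exp (μ * (y - a)) * g t) :
    ‖∫ t in a..y, W t * (ρ₁ : ℂ) * φ t‖
      ≤ B * Real.exp (μ * (y - a)) * ∫ t in a..y, g t := by
  have hB0 : 0 ≤ B := hB ▸ mul_nonneg hρ.le hSb
  have hbc : Continuous (fun t => B * Real.exp (μ * (y - a)) * g t) := by fun_prop
  have h1 : ‖∫ t in a..y, W t * (ρ₁ : ℂ) * φ t‖
      ≤ |∫ t in a..y, B * Real.exp (μ * (y - a)) * g t| := by
    apply intervalIntegral.norm_integral_le_abs_of_norm_le _ (hbc.intervalIntegrable a y)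
    rw [Set.uIoc_of_le hay]
    refine MeasureTheory.ae_restrict_of_forall_mem measurableSet_Ioc ?_
    intro t ht
    calc ‖W t * (ρ₁ : ℂ) * φ t‖
        = ‖W t‖ * ρ₁ * ‖φ t‖ := by
          rw [norm_mul, norm_mul, Complex.norm_real, Real.norm_eq_abs,
            _root_.abs_of_nonneg hρ.le]
      _ ≤ (Sb * Real.exp (μ * (y - t))) * ρ₁ * ‖φ t‖ := by
          exact mul_le_mul_of_nonneg_right
            (mul_le_mul_of_nonneg_right (hW t ht) hρ.le) (norm_nonneg _)
      _ = (ρ₁ * Sb) * (‖φ t‖ * Real.exp (μ * (y - t))) := by ring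
      _ ≤ (ρ₁ * Sb) * (Real.exp (μ * (y - a)) * g t) := by
          exact mul_le_mul_of_nonneg_left (hφg t ht) (mul_nonneg hρ.le hSb)
      _ = B * Real.exp (μ * (y - a)) * g t := by rw [hB]; ring
  have hIg0 : 0 ≤ ∫ t in a..y, g t := intervalIntegral.integral_nonneg hay (fun t _ => hg0 t)
  have h2 : |∫ t in a..y, B * Real.exp (μ * (y - a)) * g t|
      = B * Real.exp (μ * (y - a)) * ∫ t in a..y, g t := by
    rw [intervalIntegral.integral_const_mul, _root_.abs_of_nonneg (by positivity)]
  exact h1.trans_eq h2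

lemma integral_add_const {a y : ℝ} (F : ℝ → ℂ) (Cst : ℂ)
    (hF : IntervalIntegrable F MeasureTheory.volume a y) :
    (∫ t in a..y, (F t + Cst)) = (∫ t in a..y, F t) + (y - a) • Cst := by
  rw [intervalIntegral.integral_add hF intervalIntegrable_const, intervalIntegral.integral_const]

lemma abs_add₃ (z₁ z₂ z₃ : ℂ) {r₁ r₂ r₃ : ℝ} (h₁ : ‖z₁‖ ≤ r₁)
    (h₂ : ‖z₂‖ ≤ r₂) (h₃ : ‖z₃‖ ≤ r₃) :
    ‖z₁ + z₂ + z₃‖ ≤ r₁ + r₂ + r₃ :=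
  le_trans (norm_add_le _ _)
    (add_le_add (le_trans (norm_add_le _ _) (add_le_add h₁ h₂)) h₃)

/-- Gronwall-type bound: solutions of the Volterra integral equations grow at most
like `K|λ| e^{|Im λ| ρ₁ (x-a)}` on `[a,ξ₁]` for `|λ| ≥ 1`. -/
theorem volterra_growth_bound (a ξ₁ ρ₁ α₁ α₂ α₁' α₂' : ℝ)
    (haξ : a < ξ₁) (hρ₁ : 0 < ρ₁)
    (p q r : ℝ → ℝ)
    (hp : ContinuousOn p (Set.Icc a ξ₁)) (hq : ContinuousOn q (Set.Icc a ξ₁))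
    (hr : ContinuousOn r (Set.Icc a ξ₁))
    (φ₁₁ φ₁₂ : ℂ → ℝ → ℂ)
    (hc₁ : ∀ lam : ℂ, ContinuousOn (φ₁₁ lam) (Set.Icc a ξ₁))
    (hc₂ : ∀ lam : ℂ, ContinuousOn (φ₁₂ lam) (Set.Icc a ξ₁))
    (heq₁ : ∀ (lam : ℂ), ∀ x ∈ Set.Icc a ξ₁,
      φ₁₁ lam x = -(lam * α₁' - α₁) * Complex.sin (lam * ρ₁ * ((x : ℂ) - a))
        + (lam * α₂' - α₂) * Complex.cos (lam * ρ₁ * ((x : ℂ) - a))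
        + ∫ t in a..x, ((p t : ℂ) * Complex.sin (lam * ρ₁ * ((x : ℂ) - t)) +
            (q t : ℂ) * Complex.cos (lam * ρ₁ * ((x : ℂ) - t))) * ρ₁ * φ₁₁ lam t
        + ∫ t in a..x, ((q t : ℂ) * Complex.sin (lam * ρ₁ * ((x : ℂ) - t)) +
            (r t : ℂ) * Complex.cos (lam * ρ₁ * ((x : ℂ) - t))) * ρ₁ * φ₁₂ lam t)
    (heq₂ : ∀ (lam : ℂ), ∀ x ∈ Set.Icc a ξ₁,
      φ₁₂ lam x = (lam * α₁' - α₁) * Complex.cos (lam * ρ₁ * ((x : ℂ) - a))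
        + (lam * α₂' - α₂) * Complex.sin (lam * ρ₁ * ((x : ℂ) - a))
        + ∫ t in a..x, (-(p t : ℂ) * Complex.cos (lam * ρ₁ * ((x : ℂ) - t)) +
            (q t : ℂ) * Complex.sin (lam * ρ₁ * ((x : ℂ) - t))) * ρ₁ * φ₁₁ lam t
        + ∫ t in a..x, (-(q t : ℂ) * Complex.cos (lam * ρ₁ * ((x : ℂ) - t)) +
            (r t : ℂ) * Complex.sin (lam * ρ₁ * ((x : ℂ) - t))) * ρ₁ * φ₁₂ lam t) :
    ∃ K : ℝ, ∀ x ∈ Set.Icc a ξ₁, ∀ lam : ℂ, 1 ≤ ‖lam‖ →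
      ‖φ₁₁ lam x‖ ≤
          K * ‖lam‖ * Real.exp (|lam.im| * ρ₁ * (x - a)) ∧
      ‖φ₁₂ lam x‖ ≤
          K * ‖lam‖ * Real.exp (|lam.im| * ρ₁ * (x - a)) := by
  obtain ⟨Pb, hPb⟩ := isCompact_Icc.exists_bound_of_continuousOn hp
  obtain ⟨Qb, hQb⟩ := isCompact_Icc.exists_bound_of_continuousOn hq
  obtain ⟨Rb, hRb⟩ := isCompact_Icc.exists_bound_of_continuousOn hr
  have hmem_a : a ∈ Set.Icc a ξ₁ := ⟨le_refl a, haξ.le⟩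
  have hPb0 : 0 ≤ Pb := (norm_nonneg _).trans (hPb a hmem_a)
  have hQb0 : 0 ≤ Qb := (norm_nonneg _).trans (hQb a hmem_a)
  have hRb0 : 0 ≤ Rb := (norm_nonneg _).trans (hRb a hmem_a)
  set Sb := Pb + Qb + Rb with hSbdef
  have hSb0 : 0 ≤ Sb := by positivity
  set B := ρ₁ * Sb with hBdef
  have hB0 : 0 ≤ B := by positivity
  set L := (2 + 2 * (ξ₁ - a)) * B + 1 with hLdef
  have hL0 : 0 < L := by
    have h1 : 0 ≤ (2 + 2 * (ξ₁ - a)) * B := mul_nonneg (by linarith) hB0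
    linarith
  set Ca := |α₁'| + |α₁| + |α₂'| + |α₂| with hCadef
  have hCa0 : 0 ≤ Ca := by positivity
  refine ⟨2 * Ca * Real.exp (L * (ξ₁ - a)), ?_⟩
  intro x hx lam hlam
  set μ := |lam.im| * ρ₁ with hμdef
  have hμ0 : 0 ≤ μ := by positivity
  set c : ℝ → ℝ := fun t => max a (min t ξ₁) with hcdef
  have hcmem : ∀ t, c t ∈ Set.Icc a ξ₁ :=
    fun t => ⟨le_max_left _ _, max_le haξ.le (min_le_right _ _)⟩
  have hceq : ∀ t ∈ Set.Icc a ξ₁, c t = t := by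
    intro t ht
    simp only [hcdef]
    rw [min_eq_left ht.2, max_eq_right ht.1]
  have hcc : Continuous c := continuous_const.max (continuous_id.min continuous_const)
  set f : ℝ → ℝ := fun t => ‖φ₁₁ lam t‖ + ‖φ₁₂ lam t‖ with hfdef
  set g : ℝ → ℝ := fun t => Real.exp (-(μ * (c t - a))) * f (c t) with hgdef
  have hφ1c : Continuous fun t => φ₁₁ lam (c t) := (hc₁ lam).comp_continuous hcc hcmem
  have hφ2c : Continuous fun t => φ₁₂ lam (c t) := (hc₂ lam).comp_continuous hcc hcmem
  have hgc : Continuous g := by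
    rw [hgdef]
    exact (Real.continuous_exp.comp
        ((continuous_const.mul (hcc.sub continuous_const)).neg)).mul
      ((continuous_norm.comp hφ1c).add (continuous_norm.comp hφ2c))
  have hg0 : ∀ t, 0 ≤ g t := fun t =>
    mul_nonneg (Real.exp_pos _).le (add_nonneg (norm_nonneg _) (norm_nonneg _))
  have him : ∀ u v : ℝ, (lam * (ρ₁ : ℂ) * ((u : ℂ) - v)).im = lam.im * (ρ₁ * (u - v)) := by
    intro u v
    have h : lam * (ρ₁ : ℂ) * ((u : ℂ) - v) = lam * ((ρ₁ * (u - v) : ℝ) : ℂ) := by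
      push_cast; ring
    rw [h, Complex.mul_im]
    simp
  have hsin : ∀ u v : ℝ, v ≤ u →
      ‖Complex.sin (lam * (ρ₁ : ℂ) * ((u : ℂ) - v))‖ ≤ Real.exp (μ * (u - v)) := by
    intro u v huv
    refine (abs_sin_le' _).trans (Real.exp_le_exp.2 ?_)
    rw [him u v, abs_mul, _root_.abs_of_nonneg (mul_nonneg hρ₁.le (sub_nonneg.2 huv)), hμdef]
    exact le_of_eq (by ring)
  have hcos : ∀ u v : ℝ, v ≤ u →
      ‖Complex.cos (lam * (ρ₁ : ℂ) * ((u : ℂ) - v))‖ ≤ Real.exp (μ * (u - v)) := by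
    intro u v huv
    refine (abs_cos_le' _).trans (Real.exp_le_exp.2 ?_)
    rw [him u v, abs_mul, _root_.abs_of_nonneg (mul_nonneg hρ₁.le (sub_nonneg.2 huv)), hμdef]
    exact le_of_eq (by ring)
  set C := 2 * (‖lam * α₁' - α₁‖ + ‖lam * α₂' - α₂‖) with hCdef
  have hC0 : 0 ≤ C := by positivity
  have hfg : ∀ (y : ℝ), y ≤ ξ₁ → ∀ t ∈ Set.Ioc a y,
      f t * Real.exp (μ * (y - t)) = Real.exp (μ * (y - a)) * g t := by
    intro y hyξ t ht
    have htm : t ∈ Set.Icc a ξ₁ := ⟨ht.1.le, ht.2.trans hyξ⟩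
    simp only [hgdef, hceq t htm]
    rw [show μ * (y - t) = μ * (y - a) + -(μ * (t - a)) by ring, Real.exp_add]
    ring
  have key : ∀ y ∈ Set.Icc a ξ₁, g y ≤ C + L * ∫ t in a..y, g t := by
    intro y hy
    obtain ⟨hay, hyξ⟩ := hy
    have hIg0 : 0 ≤ ∫ t in a..y, g t := intervalIntegral.integral_nonneg hay (fun t _ => hg0 t)
    have hφ1g : ∀ t ∈ Set.Ioc a y,
        ‖φ₁₁ lam t‖ * Real.exp (μ * (y - t)) ≤ Real.exp (μ * (y - a)) * g t := by
      intro t ht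
      rw [← hfg y hyξ t ht]
      exact mul_le_mul_of_nonneg_right (le_add_of_nonneg_right (norm_nonneg _))
        (Real.exp_pos _).le
    have hφ2g : ∀ t ∈ Set.Ioc a y,
        ‖φ₁₂ lam t‖ * Real.exp (μ * (y - t)) ≤ Real.exp (μ * (y - a)) * g t := by
      intro t ht
      rw [← hfg y hyξ t ht]
      exact mul_le_mul_of_nonneg_right (le_add_of_nonneg_left (norm_nonneg _))
        (Real.exp_pos _).le
    -- kernel bounds
    have hW₁ : ∀ t ∈ Set.Ioc a y,
        ‖(p t : ℂ) * Complex.sin (lam * ρ₁ * ((y : ℂ) - t)) +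
          (q t : ℂ) * Complex.cos (lam * ρ₁ * ((y : ℂ) - t))‖ ≤ Sb * Real.exp (μ * (y - t)) := by
      intro t ht
      have htm : t ∈ Set.Icc a ξ₁ := ⟨ht.1.le, ht.2.trans hyξ⟩
      refine (abs_lin_le _ _ _ _ _ (hsin y t ht.2) (hcos y t ht.2)).trans ?_
      apply mul_le_mul_of_nonneg_right _ (Real.exp_pos _).le
      simp only [Complex.norm_real, Real.norm_eq_abs, hSbdef]
      have h1 := hPb t htm; have h2 := hQb t htm
      rw [Real.norm_eq_abs] at h1 h2
      linarith
    have hW₂ : ∀ t ∈ Set.Ioc a y,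
        ‖(q t : ℂ) * Complex.sin (lam * ρ₁ * ((y : ℂ) - t)) +
          (r t : ℂ) * Complex.cos (lam * ρ₁ * ((y : ℂ) - t))‖ ≤ Sb * Real.exp (μ * (y - t)) := by
      intro t ht
      have htm : t ∈ Set.Icc a ξ₁ := ⟨ht.1.le, ht.2.trans hyξ⟩
      refine (abs_lin_le _ _ _ _ _ (hsin y t ht.2) (hcos y t ht.2)).trans ?_
      apply mul_le_mul_of_nonneg_right _ (Real.exp_pos _).le
      simp only [Complex.norm_real, Real.norm_eq_abs, hSbdef]
      have h1 := hQb t htm; have h2 := hRb t htm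
      rw [Real.norm_eq_abs] at h1 h2
      linarith
    have hW₃ : ∀ t ∈ Set.Ioc a y,
        ‖-(p t : ℂ) * Complex.cos (lam * ρ₁ * ((y : ℂ) - t)) +
          (q t : ℂ) * Complex.sin (lam * ρ₁ * ((y : ℂ) - t))‖ ≤ Sb * Real.exp (μ * (y - t)) := by
      intro t ht
      have htm : t ∈ Set.Icc a ξ₁ := ⟨ht.1.le, ht.2.trans hyξ⟩
      refine (abs_lin_le _ _ _ _ _ (hcos y t ht.2) (hsin y t ht.2)).trans ?_
      apply mul_le_mul_of_nonneg_right _ (Real.exp_pos _).le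
      simp only [norm_neg, Complex.norm_real, Real.norm_eq_abs, hSbdef]
      have h1 := hPb t htm; have h2 := hQb t htm
      rw [Real.norm_eq_abs] at h1 h2
      linarith
    have hW₄ : ∀ t ∈ Set.Ioc a y,
        ‖-(q t : ℂ) * Complex.cos (lam * ρ₁ * ((y : ℂ) - t)) +
          (r t : ℂ) * Complex.sin (lam * ρ₁ * ((y : ℂ) - t))‖ ≤ Sb * Real.exp (μ * (y - t)) := by
      intro t ht
      have htm : t ∈ Set.Icc a ξ₁ := ⟨ht.1.le, ht.2.trans hyξ⟩
      refine (abs_lin_le _ _ _ _ _ (hcos y t ht.2) (hsin y t ht.2)).trans ?_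
      apply mul_le_mul_of_nonneg_right _ (Real.exp_pos _).le
      simp only [norm_neg, Complex.norm_real, Real.norm_eq_abs, hSbdef]
      have h1 := hQb t htm; have h2 := hRb t htm
      rw [Real.norm_eq_abs] at h1 h2
      linarith
    have hI₁ : ‖∫ t in a..y,
        ((p t : ℂ) * Complex.sin (lam * ρ₁ * ((y : ℂ) - t)) +
          (q t : ℂ) * Complex.cos (lam * ρ₁ * ((y : ℂ) - t))) * ρ₁ * φ₁₁ lam t‖
        ≤ B * Real.exp (μ * (y - a)) * ∫ t in a..y, g t :=
      kernel_integral_bound a y ρ₁ μ B Sb hρ₁ hSb0 hay hBdef _ _ g hgc hg0 hW₁ hφ1g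
    have hI₂ : ‖∫ t in a..y,
        ((q t : ℂ) * Complex.sin (lam * ρ₁ * ((y : ℂ) - t)) +
          (r t : ℂ) * Complex.cos (lam * ρ₁ * ((y : ℂ) - t))) * ρ₁ * φ₁₂ lam t‖
        ≤ B * Real.exp (μ * (y - a)) * ∫ t in a..y, g t :=
      kernel_integral_bound a y ρ₁ μ B Sb hρ₁ hSb0 hay hBdef _ _ g hgc hg0 hW₂ hφ2g
    have hI₃ : ‖∫ t in a..y,
        (-(p t : ℂ) * Complex.cos (lam * ρ₁ * ((y : ℂ) - t)) +
          (q t : ℂ) * Complex.sin (lam * ρ₁ * ((y : ℂ) - t))) * ρ₁ * φ₁₁ lam t‖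
        ≤ B * Real.exp (μ * (y - a)) * ∫ t in a..y, g t :=
      kernel_integral_bound a y ρ₁ μ B Sb hρ₁ hSb0 hay hBdef _ _ g hgc hg0 hW₃ hφ1g
    have hI₄ : ‖∫ t in a..y,
        (-(q t : ℂ) * Complex.cos (lam * ρ₁ * ((y : ℂ) - t)) +
          (r t : ℂ) * Complex.sin (lam * ρ₁ * ((y : ℂ) - t))) * ρ₁ * φ₁₂ lam t‖
        ≤ B * Real.exp (μ * (y - a)) * ∫ t in a..y, g t :=
      kernel_integral_bound a y ρ₁ μ B Sb hρ₁ hSb0 hay hBdef _ _ g hgc hg0 hW₄ hφ2g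
    -- splitting lemma
    have hsplitabs : ∀ (F : ℝ → ℂ) (Cst b : ℂ) (Rb Rf Rc : ℝ),
        IntervalIntegrable F MeasureTheory.volume a y →
        ‖b‖ ≤ Rb → ‖∫ t in a..y, F t‖ ≤ Rf →
        ‖Cst‖ ≤ Rc → 0 ≤ Rc →
        ‖b + ∫ t in a..y, (F t + Cst)‖ ≤ Rb + Rf + (ξ₁ - a) * Rc := by
      intro F Cst b Rb Rf Rc hF hb hFb hCb hRc
      rw [integral_add_const F Cst hF]
      refine (norm_add_le _ _).trans ?_
      have h2 : ‖(∫ t in a..y, F t) + (y - a) • Cst‖ ≤ Rf + (ξ₁ - a) * Rc := by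
        refine (norm_add_le _ _).trans (add_le_add hFb ?_)
        rw [Complex.real_smul, norm_mul, Complex.norm_real, Real.norm_eq_abs,
          _root_.abs_of_nonneg (sub_nonneg.2 hay)]
        exact mul_le_mul (by linarith) hCb (norm_nonneg _) (by linarith)
      linarith
    -- boundary bounds
    have hb₁ : ‖-(lam * α₁' - α₁) * Complex.sin (lam * ρ₁ * ((y : ℂ) - a))
        + (lam * α₂' - α₂) * Complex.cos (lam * ρ₁ * ((y : ℂ) - a))‖
        ≤ (‖lam * α₁' - α₁‖ + ‖lam * α₂' - α₂‖)
            * Real.exp (μ * (y - a)) := by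
      refine (abs_lin_le _ _ _ _ _ (hsin y a hay) (hcos y a hay)).trans ?_
      rw [norm_neg]
    have hb₂ : ‖(lam * α₁' - α₁) * Complex.cos (lam * ρ₁ * ((y : ℂ) - a))
        + (lam * α₂' - α₂) * Complex.sin (lam * ρ₁ * ((y : ℂ) - a))‖
        ≤ (‖lam * α₁' - α₁‖ + ‖lam * α₂' - α₂‖)
            * Real.exp (μ * (y - a)) :=
      abs_lin_le _ _ _ _ _ (hcos y a hay) (hsin y a hay)
    -- integrability of the outer integrands
    have hsubI : Set.uIcc a y ⊆ Set.Icc a ξ₁ := by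
      rw [Set.uIcc_of_le hay]; exact Set.Icc_subset_Icc_right hyξ
    have hsinc : Continuous fun t : ℝ => Complex.sin (lam * (ρ₁ : ℂ) * ((y : ℂ) - t)) :=
      Complex.continuous_sin.comp
        (continuous_const.mul (continuous_const.sub Complex.continuous_ofReal))
    have hcosc : Continuous fun t : ℝ => Complex.cos (lam * (ρ₁ : ℂ) * ((y : ℂ) - t)) :=
      Complex.continuous_cos.comp
        (continuous_const.mul (continuous_const.sub Complex.continuous_ofReal))
    have hpc : ContinuousOn (fun t => (p t : ℂ)) (Set.uIcc a y) :=
      Complex.continuous_ofReal.comp_continuousOn (hp.mono hsubI)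
    have hqc : ContinuousOn (fun t => (q t : ℂ)) (Set.uIcc a y) :=
      Complex.continuous_ofReal.comp_continuousOn (hq.mono hsubI)
    have hint₁ : IntervalIntegrable (fun t =>
        ((p t : ℂ) * Complex.sin (lam * ρ₁ * ((y : ℂ) - t)) +
          (q t : ℂ) * Complex.cos (lam * ρ₁ * ((y : ℂ) - t))) * ρ₁ * φ₁₁ lam t)
        MeasureTheory.volume a y :=
      ContinuousOn.intervalIntegrable
        ((((hpc.mul hsinc.continuousOn).add (hqc.mul hcosc.continuousOn)).mul
          continuousOn_const).mul ((hc₁ lam).mono hsubI))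
    have hint₃ : IntervalIntegrable (fun t =>
        (-(p t : ℂ) * Complex.cos (lam * ρ₁ * ((y : ℂ) - t)) +
          (q t : ℂ) * Complex.sin (lam * ρ₁ * ((y : ℂ) - t))) * ρ₁ * φ₁₁ lam t)
        MeasureTheory.volume a y :=
      ContinuousOn.intervalIntegrable
        (((((hpc.neg).mul hcosc.continuousOn).add (hqc.mul hsinc.continuousOn)).mul
          continuousOn_const).mul ((hc₁ lam).mono hsubI))
    -- combine
    have e₁ := heq₁ lam y ⟨hay, hyξ⟩
    have e₂ := heq₂ lam y ⟨hay, hyξ⟩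
    have hBeI0 : 0 ≤ B * Real.exp (μ * (y - a)) * ∫ t in a..y, g t := by positivity
    have habs1 : ‖φ₁₁ lam y‖
        ≤ (‖lam * α₁' - α₁‖ + ‖lam * α₂' - α₂‖) * Real.exp (μ * (y - a))
          + B * Real.exp (μ * (y - a)) * (∫ t in a..y, g t)
          + (ξ₁ - a) * (B * Real.exp (μ * (y - a)) * (∫ t in a..y, g t)) := by
      rw [e₁]
      exact hsplitabs _ _ _ _ _ _ hint₁ hb₁ hI₁ hI₂ hBeI0
    have habs2 : ‖φ₁₂ lam y‖
        ≤ (‖lam * α₁' - α₁‖ + ‖lam * α₂' - α₂‖) * Real.exp (μ * (y - a))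
          + B * Real.exp (μ * (y - a)) * (∫ t in a..y, g t)
          + (ξ₁ - a) * (B * Real.exp (μ * (y - a)) * (∫ t in a..y, g t)) := by
      rw [e₂]
      exact hsplitabs _ _ _ _ _ _ hint₃ hb₂ hI₃ hI₄ hBeI0
    have hfy : f y ≤ Real.exp (μ * (y - a)) *
        (C + (2 + 2 * (ξ₁ - a)) * B * ∫ t in a..y, g t) := by
      simp only [hfdef, hCdef]
      have hexpand : Real.exp (μ * (y - a)) *
          (2 * (‖lam * α₁' - α₁‖ + ‖lam * α₂' - α₂‖)
            + (2 + 2 * (ξ₁ - a)) * B * ∫ t in a..y, g t)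
          = 2 * ((‖lam * α₁' - α₁‖ + ‖lam * α₂' - α₂‖)
              * Real.exp (μ * (y - a)))
            + 2 * (B * Real.exp (μ * (y - a)) * (∫ t in a..y, g t))
            + 2 * ((ξ₁ - a) * (B * Real.exp (μ * (y - a)) * (∫ t in a..y, g t))) := by
        ring
      linarith [habs1, habs2]
    have hgy : g y = Real.exp (-(μ * (y - a))) * f y := by
      simp only [hgdef, hceq y ⟨hay, hyξ⟩]
    rw [hgy]
    have hE : Real.exp (-(μ * (y - a))) * Real.exp (μ * (y - a)) = 1 := by
      rw [← Real.exp_add]; simp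
    calc Real.exp (-(μ * (y - a))) * f y
        ≤ Real.exp (-(μ * (y - a))) * (Real.exp (μ * (y - a)) *
            (C + (2 + 2 * (ξ₁ - a)) * B * ∫ t in a..y, g t)) :=
          mul_le_mul_of_nonneg_left hfy (Real.exp_pos _).le
      _ = C + (2 + 2 * (ξ₁ - a)) * B * ∫ t in a..y, g t := by
          rw [← mul_assoc, hE, one_mul]
      _ ≤ C + L * ∫ t in a..y, g t := by
          have hdist : L * ∫ t in a..y, g t
              = (2 + 2 * (ξ₁ - a)) * B * (∫ t in a..y, g t) + ∫ t in a..y, g t := by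
            rw [hLdef]; ring
          linarith [hIg0]
  -- Gronwall
  have hgb := gronwall_integral_form hL0 hC0 hgc hg0 key x hx
  have hgx : g x = Real.exp (-(μ * (x - a))) * f x := by
    simp only [hgdef, hceq x hx]
  have hfx : f x ≤ C * Real.exp (L * (x - a)) * Real.exp (μ * (x - a)) := by
    have hEq : f x = Real.exp (μ * (x - a)) * g x := by
      rw [hgx, ← mul_assoc, ← Real.exp_add]; simp
    rw [hEq]
    calc Real.exp (μ * (x - a)) * g x
        ≤ Real.exp (μ * (x - a)) * (C * Real.exp (L * (x - a))) :=
          mul_le_mul_of_nonneg_left hgb (Real.exp_pos _).le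
      _ = C * Real.exp (L * (x - a)) * Real.exp (μ * (x - a)) := by ring
  have hCle : C ≤ 2 * Ca * ‖lam‖ := by
    have h1 : ‖lam * α₁' - α₁‖ ≤ ‖lam‖ * |α₁'| + |α₁| := by
      refine (norm_sub_le _ _).trans ?_
      simp only [norm_mul, Complex.norm_real, Real.norm_eq_abs, le_refl]
    have h2 : ‖lam * α₂' - α₂‖ ≤ ‖lam‖ * |α₂'| + |α₂| := by
      refine (norm_sub_le _ _).trans ?_
      simp only [norm_mul, Complex.norm_real, Real.norm_eq_abs, le_refl]
    rw [hCdef, hCadef]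
    nlinarith [abs_nonneg α₁, abs_nonneg α₂, abs_nonneg α₁', abs_nonneg α₂', hlam]
  have hexp : Real.exp (L * (x - a)) ≤ Real.exp (L * (ξ₁ - a)) :=
    Real.exp_le_exp.2 (mul_le_mul_of_nonneg_left (by linarith [hx.2]) hL0.le)
  have final : f x ≤ 2 * Ca * Real.exp (L * (ξ₁ - a)) * ‖lam‖ * Real.exp (μ * (x - a)) := by
    calc f x ≤ C * Real.exp (L * (x - a)) * Real.exp (μ * (x - a)) := hfx
      _ ≤ (2 * Ca * ‖lam‖) * Real.exp (L * (ξ₁ - a)) * Real.exp (μ * (x - a)) := by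
          have h0 : 0 ≤ Real.exp (μ * (x - a)) := (Real.exp_pos _).le
          have h1 : C * Real.exp (L * (x - a)) ≤ (2 * Ca * ‖lam‖) * Real.exp (L * (ξ₁ - a)) :=
            mul_le_mul hCle hexp (Real.exp_pos _).le (by positivity)
          exact mul_le_mul_of_nonneg_right h1 h0
      _ = 2 * Ca * Real.exp (L * (ξ₁ - a)) * ‖lam‖ * Real.exp (μ * (x - a)) := by ring
  constructor
  · refine le_trans ?_ final
    simp only [hfdef]
    exact le_add_of_nonneg_right (norm_nonneg _)
  · refine le_trans ?_ final
    simp only [hfdef]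
    exact le_add_of_nonneg_left (norm_nonneg _)
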